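/- For the monad T(I) = S → (I × S) on the category of generalized [0,1]-valued ultrametric spaces (for a fixed space (S,d_S)), the family of sup-max metrics d_{T I}(f₁,f₂) = sup_{s ∈ S} max(d_I(π₁(f₁ s), π₁(f₂ s)), d_S(π₂(f₁ s), π₂(f₂ s))) on nonexpansive state transformers is an Eq-relative divergence with divergence domain ([0,1], ≤, 0, max): d_{T I}(η x, η x) = 0, and d_{T J}(F₁♯ f₁, F₂♯ f₂) ≤ max(d_{T I}(f₁,f₂), sup_{x ∈ I} d_{T J}(F₁ x, F₂ x)) for all nonexpansive F₁, F₂ : I → T J and f₁, f₂ ∈ T I. -/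

import Mathlib

open scoped ENNReal

/-- Kleisli extension for the state monad `T_S I = S → I × S`. -/
def stSharp {S I J : Type*} (F : I → S → J × S) (f : S → I × S) : S → J × S :=
  fun s => F (f s).1 (f s).2

/-- The sup-max metric on state transformers `S → A × S`. -/
noncomputable def dState {S A : Type*} (dS : S → S → ℝ≥0∞) (dA : A → A → ℝ≥0∞)
    (f₁ f₂ : S → A × S) : ℝ≥0∞ :=
  ⨆ s : S, max (dA (f₁ s).1 (f₂ s).1) (dS (f₁ s).2 (f₂ s).2)

/-- On the state monad over generalized `[0,1]`-valued ultrametric spaces, the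
sup-max metrics form an `Eq`-relative divergence with divergence domain
`([0,1], ≤, 0, max)`. -/
theorem dState_eq_unit_reflexive_and_max_composable {S I J : Type*}
    (dS : S → S → ℝ≥0∞) (dI : I → I → ℝ≥0∞) (dJ : J → J → ℝ≥0∞)
    (hS1 : ∀ a b, dS a b ≤ 1) (hI1 : ∀ a b, dI a b ≤ 1) (hJ1 : ∀ a b, dJ a b ≤ 1)
    (hSr : ∀ a, dS a a = 0) (hIr : ∀ a, dI a a = 0) (hJr : ∀ a, dJ a a = 0)
    (hSu : ∀ a b c, dS a c ≤ max (dS a b) (dS b c))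
    (hIu : ∀ a b c, dI a c ≤ max (dI a b) (dI b c))
    (hJu : ∀ a b c, dJ a c ≤ max (dJ a b) (dJ b c)) :
    (∀ x : I, dState dS dI (fun s => ((x, s) : I × S)) (fun s => (x, s)) = 0) ∧
    (∀ (F₁ F₂ : I → S → J × S) (f₁ f₂ : S → I × S),
      -- f₁, f₂ nonexpansive
      (∀ s s', max (dI (f₁ s).1 (f₁ s').1) (dS (f₁ s).2 (f₁ s').2) ≤ dS s s') →
      (∀ s s', max (dI (f₂ s).1 (f₂ s').1) (dS (f₂ s).2 (f₂ s').2) ≤ dS s s') →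
      -- F₁, F₂ nonexpansive (uncurried form)
      (∀ x x' s s', max (dJ (F₁ x s).1 (F₁ x' s').1) (dS (F₁ x s).2 (F₁ x' s').2) ≤
        max (dI x x') (dS s s')) →
      (∀ x x' s s', max (dJ (F₂ x s).1 (F₂ x' s').1) (dS (F₂ x s).2 (F₂ x' s').2) ≤
        max (dI x x') (dS s s')) →
      dState dS dJ (stSharp F₁ f₁) (stSharp F₂ f₂) ≤
        max (dState dS dI f₁ f₂) (⨆ x : I, dState dS dJ (F₁ x) (F₂ x))) := by
  constructor
  · intro x
    simp only [dState]
    refine le_antisymm (iSup_le fun s => ?_) zero_le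
    simp [hIr, hSr]
  · intro F₁ F₂ f₁ f₂ hf₁ hf₂ hF₁ hF₂
    refine iSup_le fun s => ?_
    simp only [stSharp]
    set a₁ := (f₁ s).1
    set s₁ := (f₁ s).2
    set a₂ := (f₂ s).1
    set s₂ := (f₂ s).2
    have h1 : max (dJ (F₁ a₁ s₁).1 (F₂ a₁ s₁).1) (dS (F₁ a₁ s₁).2 (F₂ a₁ s₁).2) ≤
        ⨆ x : I, dState dS dJ (F₁ x) (F₂ x) := by
      refine le_trans ?_ (le_iSup (fun x => dState dS dJ (F₁ x) (F₂ x)) a₁)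
      exact le_iSup (fun t => max (dJ (F₁ a₁ t).1 (F₂ a₁ t).1) (dS (F₁ a₁ t).2 (F₂ a₁ t).2)) s₁
    have h2 : max (dJ (F₂ a₁ s₁).1 (F₂ a₂ s₂).1) (dS (F₂ a₁ s₁).2 (F₂ a₂ s₂).2) ≤
        dState dS dI f₁ f₂ := by
      refine le_trans (hF₂ a₁ a₂ s₁ s₂) ?_
      exact le_iSup (fun t => max (dI (f₁ t).1 (f₂ t).1) (dS (f₁ t).2 (f₂ t).2)) s
    have hJ' : dJ (F₁ a₁ s₁).1 (F₂ a₂ s₂).1 ≤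
        max (⨆ x : I, dState dS dJ (F₁ x) (F₂ x)) (dState dS dI f₁ f₂) := by
      refine le_trans (hJu _ (F₂ a₁ s₁).1 _) ?_
      exact max_le_max (le_trans (le_max_left _ _) h1) (le_trans (le_max_left _ _) h2)
    have hS' : dS (F₁ a₁ s₁).2 (F₂ a₂ s₂).2 ≤
        max (⨆ x : I, dState dS dJ (F₁ x) (F₂ x)) (dState dS dI f₁ f₂) := by
      refine le_trans (hSu _ (F₂ a₁ s₁).2 _) ?_
      exact max_le_max (le_trans (le_max_right _ _) h1) (le_trans (le_max_right _ _) h2)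
    rw [max_comm (dState dS dI f₁ f₂)]
    exact max_le hJ' hS'
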